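/- Every infinite virtually cyclic subgroup Q of Houghton's group H_n is finite-by-ℤ: there exists a finite normal subgroup F ⊴ Q such that the quotient Q/F is infinite cyclic. In particular, no infinite virtually cyclic subgroup of H_n is finite-by-(infinite dihedral). -/

import Mathlib

/-- `f : ℕ × Fin n → ℕ × Fin n` is eventually a translation with translation
vector `m : Fin n → ℤ`: on each ray `ℕ × {x}`, for all sufficiently large `i`,
`f` sends `(i, x)` to `(i + m x, x)`. -/
def EvTrans (n : ℕ) (f : ℕ × Fin n → ℕ × Fin n) (m : Fin n → ℤ) : Prop :=
  ∀ x : Fin n, ∃ z : ℕ, ∀ i : ℕ, z ≤ i →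
    (f (i, x)).2 = x ∧ ((f (i, x)).1 : ℤ) = (i : ℤ) + m x

/-- Houghton's group `H_n`: the subgroup of the symmetric group on
`S = ℕ × Fin n` consisting of the permutations that are eventually
translations on each ray. -/
def Houghton (n : ℕ) : Subgroup (Equiv.Perm (ℕ × Fin n)) where
  carrier := {f : Equiv.Perm (ℕ × Fin n) | ∃ m : Fin n → ℤ, EvTrans n (⇑f) m}
  one_mem' := ⟨0, fun x => ⟨0, fun i _ => by simp⟩⟩
  mul_mem' := by
    rintro a b ⟨ma, hA⟩ ⟨mb, hB⟩
    refine ⟨ma + mb, fun x => ?_⟩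
    obtain ⟨za, hza⟩ := hA x
    obtain ⟨zb, hzb⟩ := hB x
    refine ⟨max zb ((za : ℤ) - mb x).toNat, fun i hi => ?_⟩
    have hib : zb ≤ i := le_trans (le_max_left _ _) hi
    obtain ⟨h2, h1⟩ := hzb i hib
    have hbx : (⇑b) (i, x) = ((b (i, x)).1, x) := Prod.ext_iff.mpr ⟨rfl, h2⟩
    have hk : za ≤ (b (i, x)).1 := by
      have h3 : ((za : ℤ) - mb x) ≤ (i : ℤ) := by
        calc ((za : ℤ) - mb x) ≤ (((za : ℤ) - mb x).toNat : ℤ) := Int.self_le_toNat _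
          _ ≤ (i : ℤ) := by exact_mod_cast le_trans (le_max_right _ _) hi
      have h4 : (za : ℤ) ≤ ((b (i, x)).1 : ℤ) := by rw [h1]; linarith
      exact_mod_cast h4
    obtain ⟨h4, h5⟩ := hza (b (i, x)).1 hk
    constructor
    · show ((a * b) (i, x)).2 = x
      rw [Equiv.Perm.mul_apply, hbx]
      exact h4
    · show (((a * b) (i, x)).1 : ℤ) = (i : ℤ) + (ma + mb) x
      rw [Equiv.Perm.mul_apply, hbx, h5, h1, Pi.add_apply]
      ring
  inv_mem' := by
    rintro a ⟨m, hm⟩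
    refine ⟨-m, fun x => ?_⟩
    obtain ⟨z, hz⟩ := hm x
    refine ⟨((z : ℤ) + m x).toNat, fun i hi => ?_⟩
    have h1 : (z : ℤ) + m x ≤ (i : ℤ) :=
      le_trans (Int.self_le_toNat _) (by exact_mod_cast hi)
    have h0 : (0 : ℤ) ≤ (i : ℤ) - m x := by
      have hz0 : (0 : ℤ) ≤ (z : ℤ) := Int.natCast_nonneg z
      linarith
    set j := ((i : ℤ) - m x).toNat with hjdef
    have hj' : (j : ℤ) = (i : ℤ) - m x := Int.toNat_of_nonneg h0
    have hjz : z ≤ j := by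
      have : (z : ℤ) ≤ (j : ℤ) := by rw [hj']; linarith
      exact_mod_cast this
    obtain ⟨h2, h3⟩ := hz j hjz
    have hfst : (a (j, x)).1 = i := by
      have : ((a (j, x)).1 : ℤ) = (i : ℤ) := by rw [h3, hj']; ring
      exact_mod_cast this
    have hfix : (⇑a) (j, x) = (i, x) := Prod.ext_iff.mpr ⟨hfst, h2⟩
    have hinv : (⇑a⁻¹) (i, x) = (j, x) := by
      rw [← hfix]
      exact Equiv.symm_apply_apply a (j, x)
    constructor
    · rw [hinv]
    · rw [hinv]
      show (j : ℤ) = (i : ℤ) + (-m) x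
      rw [hj', Pi.neg_apply]
      ring

section HoughtonAux

open Subgroup

lemma isOfFinOrder_of_injective {G H : Type*} [Group G] [Group H] (f : G →* H)
    (hf : Function.Injective f) {x : G} (h : IsOfFinOrder (f x)) : IsOfFinOrder x := by
  obtain ⟨k, hk, hk1⟩ := (isOfFinOrder_iff_pow_eq_one).mp h
  exact isOfFinOrder_iff_pow_eq_one.mpr ⟨k, hk, hf (by rw [map_pow, hk1, map_one])⟩

lemma perm_pow_fixed {α : Type*} (f : Equiv.Perm α) (k : ℕ) (x : α) (hx : f x = x) :
    (f ^ k) x = x := by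
  induction k with
  | zero => simp
  | succ m ih => rw [pow_succ, Equiv.Perm.mul_apply, hx, ih]

/-- A permutation that moves only finitely many points has finite order. -/
lemma isOfFinOrder_of_finite_support {α : Type*} (f : Equiv.Perm α)
    (h : {x | f x ≠ x}.Finite) : IsOfFinOrder f := by
  classical
  have hinv : ∀ x, f x ≠ x ↔ f (f x) ≠ f x := by
    intro x
    constructor
    · intro hx hfx; exact hx (f.injective hfx)
    · intro hx hfx; exact hx (by rw [hfx, hfx])
  have : Finite {x // f x ≠ x} := h
  have hfin : IsOfFinOrder (f.subtypePerm (p := fun x => f x ≠ x) (fun x => (hinv x).symm)) := isOfFinOrder_of_finite _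
  obtain ⟨k, hk, hk1⟩ := isOfFinOrder_iff_pow_eq_one.mp hfin
  refine isOfFinOrder_iff_pow_eq_one.mpr ⟨k, hk, ?_⟩
  rw [Equiv.Perm.subtypePerm_pow] at hk1
  ext x
  by_cases hx : f x = x
  · rw [perm_pow_fixed f k x hx]; rfl
  · have := congrArg (Subtype.val) (Equiv.ext_iff.mp hk1 ⟨x, hx⟩)
    simpa using this
-- transfer IsCyclic along injective hom
lemma isCyclic_of_injective' {G H : Type*} [Group G] [Group H] [IsCyclic H] (f : G →* H)
    (hf : Function.Injective f) : IsCyclic G := by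
  have : IsCyclic f.range := Subgroup.isCyclic _
  exact isCyclic_of_surjective (MonoidHom.ofInjective hf).symm
    (MulEquiv.surjective _)

-- a cyclic group all whose elements have finite order is finite
lemma finite_of_cyclic_torsion {G : Type*} [Group G] [IsCyclic G]
    (htor : ∀ g : G, IsOfFinOrder g) : Finite G := by
  obtain ⟨g, hg⟩ := IsCyclic.exists_generator (α := G)
  have hfin : (Subgroup.zpowers g : Set G).Finite := (htor g).finite_zpowers
  have : Finite (Subgroup.zpowers g : Set G) := hfin
  exact Finite.of_surjective (fun x : (Subgroup.zpowers g : Set G) => (x : G))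
    (fun y => ⟨⟨y, hg y⟩, rfl⟩)

-- key finiteness: subgroup of torsion elements inside a virtually cyclic group is finite
lemma finite_of_torsion_subgroup {G : Type*} [Group G] (K C : Subgroup G)
    [C.FiniteIndex] [IsCyclic C] (htor : ∀ g ∈ K, IsOfFinOrder g) : Finite K := by
  set L : Subgroup K := C.subgroupOf K with hL
  have hLfi : L.FiniteIndex := Subgroup.instFiniteIndex_subgroupOf C K
  -- L embeds into C
  have hcyc : IsCyclic L := by
    have e1 : L ≃* (L.map K.subtype) := L.equivMapOfInjective K.subtype K.subtype_injective
    have hmap : L.map K.subtype = C ⊓ K := Subgroup.subgroupOf_map_subtype C K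
    haveI h3 : IsCyclic ((C ⊓ K).subgroupOf C) := Subgroup.isCyclic _
    haveI h4 : IsCyclic ↥(C ⊓ K) :=
      isCyclic_of_surjective (Subgroup.subgroupOfEquivOfLe (inf_le_left (a := C) (b := K))).toMonoidHom
        (Subgroup.subgroupOfEquivOfLe (inf_le_left (a := C) (b := K))).surjective
    have e2 : ↥L ≃* ↥(C ⊓ K) := hmap ▸ e1
    exact isCyclic_of_surjective e2.symm.toMonoidHom e2.symm.surjective
  have htorL : ∀ g : L, IsOfFinOrder g := by
    intro g
    have h1 : IsOfFinOrder ((g : K) : G) := htor _ (g : K).2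
    have h2 : IsOfFinOrder (g : K) := isOfFinOrder_of_injective K.subtype
      (Subtype.val_injective) h1
    exact isOfFinOrder_of_injective L.subtype (Subtype.val_injective) h2
  have : Finite L := finite_of_cyclic_torsion htorL
  have : Finite (↥K ⧸ L) := Subgroup.finite_quotient_of_finiteIndex (H := L)
  have : Finite ((↥K ⧸ L) × L) := Finite.instProd
  exact Finite.of_equiv _ (Subgroup.groupEquivQuotientProdSubgroup (s := L)).symm

-- torsion-free + finite-index cyclic subgroup + nontrivial  ⇒  ≃ Multiplicative ℤ
lemma comm_tf_vc_equiv_int {A : Type*} [CommGroup A]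
    (htf : ∀ a : A, IsOfFinOrder a → a = 1) (D : Subgroup A) [D.FiniteIndex] [IsCyclic D]
    (hnt : Nontrivial A) : Nonempty (A ≃* Multiplicative ℤ) := by
  have hk : D.index ≠ 0 := Subgroup.FiniteIndex.index_ne_zero
  have φinj : Function.Injective
      (fun a : A => (⟨a ^ D.index, D.pow_index_mem a⟩ : D)) := by
    intro a b hab
    have h1 : a ^ D.index = b ^ D.index := congrArg Subtype.val hab
    have h2 : (a * b⁻¹) ^ D.index = 1 := by
      rw [mul_pow, h1, inv_pow, mul_inv_cancel]
    have := htf (a * b⁻¹) (isOfFinOrder_iff_pow_eq_one.mpr ⟨D.index, Nat.pos_of_ne_zero hk, h2⟩)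
    rwa [mul_inv_eq_one] at this
  have hAcyc : IsCyclic A := isCyclic_of_injective'
    { toFun := fun a : A => (⟨a ^ D.index, D.pow_index_mem a⟩ : D)
      map_one' := by simp
      map_mul' := fun a b => by simp [mul_pow] } φinj
  obtain ⟨g, hg⟩ := IsCyclic.exists_generator (α := A)
  have hg1 : g ≠ 1 := by
    intro h
    obtain ⟨a, b, hab⟩ := hnt
    have ha := hg a
    have hb := hg b
    rw [h, Subgroup.zpowers_one_eq_bot] at ha hb
    exact hab ((Subgroup.mem_bot.mp ha).trans (Subgroup.mem_bot.mp hb).symm)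
  have hgo : ¬ IsOfFinOrder g := fun h => hg1 (htf g h)
  have hinj : Function.Injective (fun n : ℤ => g ^ n) :=
    injective_zpow_iff_not_isOfFinOrder.mpr hgo
  refine ⟨(MulEquiv.ofBijective (zpowersHom A g) ⟨?_, ?_⟩).symm⟩
  · intro x y hxy
    exact hinj hxy
  · intro a
    obtain ⟨k, hk⟩ := Subgroup.mem_zpowers_iff.mp (hg a)
    exact ⟨Multiplicative.ofAdd k, hk⟩

lemma evTrans_unique {n : ℕ} {f : ℕ × Fin n → ℕ × Fin n} {m m' : Fin n → ℤ}
    (h : EvTrans n f m) (h' : EvTrans n f m') : m = m' := by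
  funext x
  obtain ⟨z, hz⟩ := h x
  obtain ⟨z', hz'⟩ := h' x
  have h1 := (hz (max z z') (le_max_left _ _)).2
  have h2 := (hz' (max z z') (le_max_right _ _)).2
  rw [h1] at h2
  linarith

lemma evTrans_mul {n : ℕ} {a b : Equiv.Perm (ℕ × Fin n)} {ma mb : Fin n → ℤ}
    (hA : EvTrans n (⇑a) ma) (hB : EvTrans n (⇑b) mb) : EvTrans n (⇑(a * b)) (ma + mb) := by
  intro x
  obtain ⟨za, hza⟩ := hA x
  obtain ⟨zb, hzb⟩ := hB x
  refine ⟨max zb ((za : ℤ) - mb x).toNat, fun i hi => ?_⟩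
  have hib : zb ≤ i := le_trans (le_max_left _ _) hi
  obtain ⟨h2, h1⟩ := hzb i hib
  have hbx : (⇑b) (i, x) = ((b (i, x)).1, x) := Prod.ext_iff.mpr ⟨rfl, h2⟩
  have hk : za ≤ (b (i, x)).1 := by
    have h3 : ((za : ℤ) - mb x) ≤ (i : ℤ) := by
      calc ((za : ℤ) - mb x) ≤ (((za : ℤ) - mb x).toNat : ℤ) := Int.self_le_toNat _
        _ ≤ (i : ℤ) := by exact_mod_cast le_trans (le_max_right _ _) hi
    have h4 : (za : ℤ) ≤ ((b (i, x)).1 : ℤ) := by rw [h1]; linarith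
    exact_mod_cast h4
  obtain ⟨h4, h5⟩ := hza (b (i, x)).1 hk
  constructor
  · show ((a * b) (i, x)).2 = x
    rw [Equiv.Perm.mul_apply, hbx]
    exact h4
  · show (((a * b) (i, x)).1 : ℤ) = (i : ℤ) + (ma + mb) x
    rw [Equiv.Perm.mul_apply, hbx, h5, h1, Pi.add_apply]
    ring
lemma mem_houghton {n : ℕ} {f : Equiv.Perm (ℕ × Fin n)} (hf : f ∈ Houghton n) :
    ∃ m, EvTrans n (⇑f) m := hf

noncomputable def mvec {n : ℕ} (f : ↥(Houghton n)) : Fin n → ℤ :=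
  Classical.choose (mem_houghton f.2)

lemma mvec_spec {n : ℕ} (f : ↥(Houghton n)) : EvTrans n (⇑(f : Equiv.Perm (ℕ × Fin n))) (mvec f) :=
  Classical.choose_spec (mem_houghton f.2)

lemma mvec_mul {n : ℕ} (f g : ↥(Houghton n)) : mvec (f * g) = mvec f + mvec g :=
  evTrans_unique (mvec_spec (f * g)) (evTrans_mul (mvec_spec f) (mvec_spec g))

lemma mvec_one {n : ℕ} : mvec (1 : ↥(Houghton n)) = 0 := by
  refine evTrans_unique (mvec_spec 1) ?_
  intro x
  exact ⟨0, fun i _ => by simp⟩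

noncomputable def mvecHom (n : ℕ) : ↥(Houghton n) →* Multiplicative (Fin n → ℤ) where
  toFun f := Multiplicative.ofAdd (mvec f)
  map_one' := by simp [mvec_one]
  map_mul' f g := by simp [mvec_mul]

/-- An element with zero translation vector moves only finitely many points. -/
lemma finite_support_of_evTrans_zero {n : ℕ} (f : Equiv.Perm (ℕ × Fin n))
    (h : EvTrans n (⇑f) 0) : {p : ℕ × Fin n | f p ≠ p}.Finite := by
  classical
  choose z hz using h
  have hsub : {p : ℕ × Fin n | f p ≠ p} ⊆
      ↑((Finset.range (Finset.univ.sup z)) ×ˢ (Finset.univ : Finset (Fin n))) := by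
    rintro ⟨i, x⟩ hp
    simp only [Set.mem_setOf_eq] at hp
    simp only [Finset.coe_product, Set.mem_prod, Finset.mem_coe, Finset.mem_range,
      Finset.mem_univ, and_true]
    by_contra hmem
    push_neg at hmem
    have hzi : z x ≤ i := le_trans (Finset.le_sup (Finset.mem_univ x)) hmem
    obtain ⟨h1, h2⟩ := hz x i hzi
    apply hp
    have : ((f (i, x)).1 : ℤ) = (i : ℤ) := by rw [h2]; simp
    exact Prod.ext_iff.mpr ⟨by exact_mod_cast this, h1⟩
  exact Set.Finite.subset (Finset.finite_toSet _) hsub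

theorem notFinOrd_r_two : ¬ IsOfFinOrder (DihedralGroup.r (2 : ZMod 0)) := by
  intro h
  have h2 : (DihedralGroup.r (2 : ZMod 0)) = (DihedralGroup.r (1 : ZMod 0)) ^ 2 := by
    rw [DihedralGroup.r_one_pow]
    norm_num
  rw [h2] at h
  obtain ⟨k, hk, hk1⟩ := isOfFinOrder_iff_pow_eq_one.mp h
  rw [← pow_mul] at hk1
  have : IsOfFinOrder (DihedralGroup.r (1 : ZMod 0)) :=
    isOfFinOrder_iff_pow_eq_one.mpr ⟨2 * k, by omega, hk1⟩
  rw [← orderOf_pos_iff, DihedralGroup.orderOf_r_one] at this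
  omega

end HoughtonAux

open scoped commutatorElement

/-- Every infinite virtually cyclic subgroup `Q` of
Houghton's group `H_n` is finite-by-`ℤ`: there is a finite normal subgroup
`F ⊴ Q` with `Q/F` infinite cyclic.  In particular, no infinite virtually
cyclic subgroup of `H_n` is finite-by-(infinite dihedral). -/
theorem houghton_infinite_virtually_cyclic_is_finite_by_Z (n : ℕ) (hn : 1 ≤ n)
    (Q : Subgroup (Equiv.Perm (ℕ × Fin n))) (hQ : Q ≤ Houghton n)
    (hinf : Infinite Q)
    (hvc : ∃ C : Subgroup ↥Q, C.FiniteIndex ∧ IsCyclic ↥C) :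
    (∃ (F : Subgroup ↥Q) (_ : F.Normal), Finite F ∧
      Nonempty ((↥Q ⧸ F) ≃* Multiplicative ℤ)) ∧
    ¬ ∃ (F : Subgroup ↥Q) (_ : F.Normal), Finite F ∧
      Nonempty ((↥Q ⧸ F) ≃* DihedralGroup 0) := by
  
  classical
  obtain ⟨C, hCfi, hCcyc⟩ := hvc
  haveI := hCfi
  haveI := hCcyc
  set ι : ↥Q →* ↥(Houghton n) := Subgroup.inclusion hQ with hι
  set ψ : ↥Q →* Multiplicative (Fin n → ℤ) := (mvecHom n).comp ι with hψ
  -- kernel elements have finite order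
  have hker_tor : ∀ q : ↥Q, q ∈ ψ.ker → IsOfFinOrder q := by
    intro q hq
    have h0 : mvec (ι q) = 0 := hq
    have hev : EvTrans n (⇑((ι q : ↥(Houghton n)) : Equiv.Perm (ℕ × Fin n))) 0 :=
      h0 ▸ mvec_spec (ι q)
    have hfin : IsOfFinOrder ((ι q : ↥(Houghton n)) : Equiv.Perm (ℕ × Fin n)) :=
      isOfFinOrder_of_finite_support _ (finite_support_of_evTrans_zero _ hev)
    exact isOfFinOrder_of_injective ((Houghton n).subtype.comp ι)
      (Subtype.val_injective.comp (Subgroup.inclusion_injective hQ)) hfin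
  -- kernel is finite
  have hFinK : Finite ψ.ker := finite_of_torsion_subgroup ψ.ker C hker_tor
  -- torsion-freeness of the range
  have htf0 : ∀ x : Multiplicative (Fin n → ℤ), IsOfFinOrder x → x = 1 := by
    intro x hx
    obtain ⟨k, hk, hk1⟩ := isOfFinOrder_iff_pow_eq_one.mp hx
    have h2 : ∀ i : Fin n, (k : ℤ) * (Multiplicative.toAdd x i) = 0 := by
      intro i
      have := congrFun (congrArg Multiplicative.toAdd hk1) i
      simpa [toAdd_pow] using this
    have h3 : Multiplicative.toAdd x = 0 := by
      funext i
      have := h2 i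
      have hkz : (k : ℤ) ≠ 0 := by exact_mod_cast hk.ne'
      exact (mul_eq_zero.mp this).resolve_left hkz
    calc x = Multiplicative.ofAdd (Multiplicative.toAdd x) := rfl
    _ = 1 := by rw [h3]; rfl
  have htfR : ∀ a : ↥ψ.range, IsOfFinOrder a → a = 1 := by
    intro a ha
    have h1 : IsOfFinOrder (a : Multiplicative (Fin n → ℤ)) :=
      ψ.range.subtype.isOfFinOrder ha
    exact Subtype.ext (htf0 _ h1)
  -- the cyclic finite-index subgroup of the range
  set D : Subgroup ↥ψ.range := C.map ψ.rangeRestrict with hD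
  haveI hDfi : D.FiniteIndex := by
    constructor
    intro h0
    have hdvd : D.index ∣ C.index := Subgroup.index_map_dvd C ψ.rangeRestrict_surjective
    rw [h0] at hdvd
    exact hCfi.index_ne_zero (zero_dvd_iff.mp hdvd)
  haveI hDcyc : IsCyclic ↥D :=
    isCyclic_of_surjective (ψ.rangeRestrict.subgroupMap C)
      (MonoidHom.subgroupMap_surjective _ _)
  -- the range is nontrivial
  have hnt : Nontrivial ↥ψ.range := by
    by_contra hns
    haveI hsub : Subsingleton ↥ψ.range := not_nontrivial_iff_subsingleton.mp hns
    have hall : ∀ q : ↥Q, q ∈ ψ.ker := by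
      intro q
      rw [MonoidHom.mem_ker]
      have h1 : ψ.rangeRestrict q = 1 := Subsingleton.elim _ _
      calc ψ q = ((ψ.rangeRestrict q : ↥ψ.range) : Multiplicative (Fin n → ℤ)) := rfl
      _ = 1 := by rw [h1]; rfl
    haveI : Finite (↥Q ⧸ C) := Subgroup.finite_quotient_of_finiteIndex (H := C)
    have hCinf : Infinite ↥C := by
      rw [← not_finite_iff_infinite]
      intro hCf
      have : Finite ↥Q :=
        Finite.of_equiv _ (Subgroup.groupEquivQuotientProdSubgroup (s := C)).symm
      exact not_finite ↥Q
    obtain ⟨c, hc⟩ := IsCyclic.exists_generator (α := ↥C)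
    have h1 : IsOfFinOrder (c : ↥Q) := hker_tor _ (hall _)
    have h2 : IsOfFinOrder c := isOfFinOrder_of_injective C.subtype Subtype.val_injective h1
    haveI : Finite (Subgroup.zpowers c : Set ↥C) := h2.finite_zpowers
    have : Finite ↥C := Finite.of_surjective
      (fun x : (Subgroup.zpowers c : Set ↥C) => (x : ↥C)) (fun y => ⟨⟨y, hc y⟩, rfl⟩)
    exact not_finite ↥C
  obtain ⟨eR⟩ := comm_tf_vc_equiv_int htfR D hnt
  have e1 : (↥Q ⧸ ψ.ker) ≃* ↥ψ.range := QuotientGroup.quotientKerEquivRange ψ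
  constructor
  · exact ⟨ψ.ker, MonoidHom.normal_ker ψ, hFinK, ⟨e1.trans eR⟩⟩
  · rintro ⟨F', hN', hF'fin, ⟨e⟩⟩
    haveI := hN'
    set π2 : ↥Q →* DihedralGroup 0 := e.toMonoidHom.comp (QuotientGroup.mk' F') with hπ2
    have hsurj : Function.Surjective π2 :=
      e.surjective.comp (QuotientGroup.mk'_surjective F')
    obtain ⟨a, ha⟩ := hsurj (DihedralGroup.sr 0)
    obtain ⟨b, hb⟩ := hsurj (DihedralGroup.sr 1)
    have hcker : ⁅a, b⁆ ∈ ψ.ker := by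
      rw [MonoidHom.mem_ker, map_commutatorElement]
      exact commutatorElement_eq_one_iff_commute.mpr (mul_comm _ _)
    have hctor : IsOfFinOrder ⁅a, b⁆ := hker_tor _ hcker
    have hsrinv : ∀ i : ZMod 0, (DihedralGroup.sr i)⁻¹ = DihedralGroup.sr i := fun i =>
      inv_eq_of_mul_eq_one_right (DihedralGroup.sr_mul_self i)
    have himg : π2 ⁅a, b⁆ = DihedralGroup.r (2 : ZMod 0) := by
      rw [map_commutatorElement, ha, hb]
      show DihedralGroup.sr 0 * DihedralGroup.sr 1 * (DihedralGroup.sr 0)⁻¹ *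
        (DihedralGroup.sr 1)⁻¹ = DihedralGroup.r (2 : ZMod 0)
      rw [hsrinv, hsrinv, DihedralGroup.sr_mul_sr, DihedralGroup.r_mul_sr,
        DihedralGroup.sr_mul_sr]
      norm_num
    have : IsOfFinOrder (DihedralGroup.r (2 : ZMod 0)) := himg ▸ π2.isOfFinOrder hctor
    exact notFinOrd_r_two this
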